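/- Convergence theorem for stable differentiation: let f ∈ C¹([0,1]) with f(0)=0, u = f′, and suppose for each δ ∈ (0,δ₀) we have f_δ ∈ L²(0,1) with ‖f_δ − f‖ ≤ δ. If α(δ) > 0 satisfies α(δ) → 0 and δ/α(δ) → 0 as δ → 0, then u_δ := (α(δ)I + A)⁻¹ f_δ satisfies ‖u_δ − u‖ → 0 as δ → 0. -/

import Mathlib

open MeasureTheory intervalIntegral Real Filter

open Set
open scoped ENNReal NNReal

noncomputable def SD.mu : Measure ℝ := volume.restrict (Set.Ioc 0 1)

instance : SFinite SD.mu := by unfold SD.mu; infer_instance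
instance : IsFiniteMeasure SD.mu := by unfold SD.mu; infer_instance

lemma SD.eLpNorm_two (h : ℝ → ℝ) :
    eLpNorm h 2 SD.mu = (∫⁻ x, (‖h x‖₊ : ℝ≥0∞) ^ (2:ℝ) ∂(SD.mu)) ^ ((1:ℝ)/2) := by
  rw [eLpNorm_eq_lintegral_rpow_enorm_toReal two_ne_zero ENNReal.ofNat_ne_top]
  simp [enorm_eq_nnnorm]

lemma SD.ofReal_sq (b : ℝ) (hb : 0 ≤ b) :
    (ENNReal.ofReal b) ^ (2:ℝ) = ENNReal.ofReal (b^2) := by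
  rw [ENNReal.ofReal_rpow_of_nonneg hb (by norm_num)]
  norm_num [Real.rpow_natCast]

lemma SD.nnnorm_sq (y : ℝ) : (‖y‖₊ : ℝ≥0∞) ^ (2:ℝ) = ENNReal.ofReal (y^2) := by
  rw [← enorm_eq_nnnorm, ← ofReal_norm, SD.ofReal_sq _ (norm_nonneg y)]
  rw [Real.norm_eq_abs, sq_abs]

lemma SD.hasDerivAt_exp_div (a c x : ℝ) (ha : a ≠ 0) :
    HasDerivAt (fun y => a * exp ((c - y)/a)) (-exp ((c - x)/a)) x := by
  have h1 : HasDerivAt (fun y => (c - y)/a) (-1/a) x := by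
    simpa using (((hasDerivAt_id x).const_sub c).div_const a)
  have h2 := (h1.exp).const_mul a
  refine h2.congr_deriv ?_
  field_simp

lemma SD.integral_exp_sub (a : ℝ) (ha : 0 < a) (c p q : ℝ) :
    ∫ x in p..q, exp ((c - x)/a) = a * (exp ((c-p)/a) - exp ((c-q)/a)) := by
  have := integral_eq_sub_of_hasDerivAt
    (f := fun y => -(a * exp ((c - y)/a))) (f' := fun y => exp ((c - y)/a))
    (fun x _ => by simpa using (SD.hasDerivAt_exp_div a c x ha.ne').fun_neg)
    ((continuous_exp.comp ((continuous_const.sub continuous_id).div_const a)).intervalIntegrable p q)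
  rw [this]; ring

lemma SD.integral_exp_div (a : ℝ) (ha : 0 < a) (p q : ℝ) :
    ∫ x in p..q, exp (x/a) = a * (exp (q/a) - exp (p/a)) := by
  have h : ∀ x : ℝ, HasDerivAt (fun y => a * exp (y/a)) (exp (x/a)) x := by
    intro x
    have h1 : HasDerivAt (fun y : ℝ => y/a) (1/a) x := by
      simpa using (hasDerivAt_id x).div_const a
    have h2 := (h1.exp).const_mul a
    refine h2.congr_deriv ?_
    field_simp
  rw [integral_eq_sub_of_hasDerivAt (fun x _ => h x)
    ((continuous_exp.comp (continuous_id.div_const a)).intervalIntegrable p q)]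
  ring

lemma SD.expMulIntOn {g : ℝ → ℝ} (hInt : IntegrableOn g (Set.Ioc (0:ℝ) 1) volume)
    (c x : ℝ) (hx : x ∈ Set.Icc (0:ℝ) 1) :
    IntegrableOn (fun s => exp (s / c) * g s) (Set.Ioc 0 x) volume := by
  have hInt' : IntegrableOn g (Set.Ioc (0:ℝ) x) volume :=
    hInt.mono_set (Set.Ioc_subset_Ioc le_rfl hx.2)
  apply Integrable.bdd_mul hInt'
    (((continuous_exp.comp (continuous_id.div_const c))).aestronglyMeasurable)
  show ∀ᵐ s ∂_, ‖exp (s / c)‖ ≤ exp |1/c|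
  rw [ae_restrict_iff' measurableSet_Ioc]
  filter_upwards with s hs
  rw [Real.norm_eq_abs, abs_exp]
  apply exp_le_exp.2
  calc s / c ≤ |s / c| := le_abs_self _
    _ = s * |1/c| := by rw [abs_div, abs_of_nonneg hs.1.le]; rw [abs_div, abs_one]; ring
    _ ≤ 1 * |1/c| := mul_le_mul_of_nonneg_right (hs.2.trans hx.2) (abs_nonneg _)
    _ = |1/c| := one_mul _

lemma SD.intInt {g : ℝ → ℝ} (hInt : IntegrableOn g (Set.Ioc (0:ℝ) 1) volume)
    (c x : ℝ) (hx : x ∈ Set.Icc (0:ℝ) 1) :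
    IntervalIntegrable (fun s => exp (s / c) * g s) volume 0 x := by
  rw [intervalIntegrable_iff_integrableOn_Ioc_of_le hx.1]
  exact SD.expMulIntOn hInt c x hx

lemma SD.key (a : ℝ) (ha : 0 < a) (g : ℝ → ℝ) (hmeas : Measurable g)
    (hInt : IntegrableOn g (Set.Ioc (0:ℝ) 1) volume)
    (x : ℝ) (hx : x ∈ Set.Ioc (0:ℝ) 1) :
    (‖exp (-x/a) * ∫ s in (0:ℝ)..x, exp (s/a) * g s‖₊ : ℝ≥0∞) ^ (2:ℝ)
      ≤ ENNReal.ofReal a *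
        ∫⁻ s in Set.Ioc 0 x,
          ENNReal.ofReal (exp ((s-x)/a)) * ENNReal.ofReal (g s ^ 2) ∂volume := by
  have hx0 : (0:ℝ) ≤ x := hx.1.le
  have hxI : x ∈ Set.Icc (0:ℝ) 1 := ⟨hx0, hx.2⟩
  set I : ℝ := ∫ s in (0:ℝ)..x, exp (s/a) * g s with hIdef
  set J : ℝ := ∫ s in (0:ℝ)..x, exp (s/a) * |g s| with hJdef
  set L : ℝ≥0∞ := ∫⁻ s in Set.Ioc 0 x,
      ENNReal.ofReal (exp (s/a)) * ENNReal.ofReal (g s ^ 2) ∂volume with hLdef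
  have hJ0 : 0 ≤ J :=
    intervalIntegral.integral_nonneg hx0 (fun s _ => mul_nonneg (exp_pos _).le (abs_nonneg _))
  have habs : |I| ≤ J := by
    refine le_trans (intervalIntegral.abs_integral_le_integral_abs hx0) (le_of_eq ?_)
    exact intervalIntegral.integral_congr fun s _ => by
      rw [abs_mul, abs_of_pos (exp_pos _)]
  -- half-exponent identity
  have hhalf : ∀ s : ℝ, s/(2*a) + s/(2*a) = s/a := fun s => by field_simp; ring
  have hexpsq : ∀ s : ℝ, exp (s/(2*a)) * exp (s/(2*a)) = exp (s/a) := fun s => by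
    rw [← exp_add, hhalf]
  -- Cauchy-Schwarz claim
  have claim : ENNReal.ofReal J ≤
      (ENNReal.ofReal (a * exp (x/a))) ^ ((1:ℝ)/2) * L ^ ((1:ℝ)/2) := by
    have hInt2 : IntegrableOn (fun s => exp (s/a) * |g s|) (Set.Ioc 0 x) volume :=
      SD.expMulIntOn hInt.abs a x hxI
    have e1 : ENNReal.ofReal J
        = ∫⁻ s in Set.Ioc 0 x, ENNReal.ofReal (exp (s/a) * |g s|) ∂volume := by
      rw [hJdef, intervalIntegral.integral_of_le hx0,
        ofReal_integral_eq_lintegral_ofReal hInt2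
          (Filter.Eventually.of_forall fun s => by positivity)]
    have e2 : (fun s => ENNReal.ofReal (exp (s/a) * |g s|))
        = fun s => ((fun s => ENNReal.ofReal (exp (s/(2*a)))) * fun s =>
            ENNReal.ofReal (exp (s/(2*a)) * |g s|)) s := by
      funext s
      show _ = ENNReal.ofReal (exp (s/(2*a))) * ENNReal.ofReal (exp (s/(2*a)) * |g s|)
      rw [← ENNReal.ofReal_mul (exp_pos _).le, ← mul_assoc, hexpsq]
    rw [e1, lintegral_congr (fun s => congrFun e2 s)]
    refine le_trans (ENNReal.lintegral_mul_le_Lp_mul_Lq _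
      Real.HolderConjugate.two_two
      (ENNReal.measurable_ofReal.comp
        (continuous_exp.comp (continuous_id.div_const (2*a))).measurable).aemeasurable
      (ENNReal.measurable_ofReal.comp
        (((continuous_exp.comp (continuous_id.div_const (2*a))).measurable).mul
          hmeas.abs)).aemeasurable) ?_
    have f1 : (∫⁻ s in Set.Ioc 0 x, ENNReal.ofReal (exp (s/(2*a))) ^ (2:ℝ) ∂volume)
        ≤ ENNReal.ofReal (a * exp (x/a)) := by
      have e3 : (fun s => ENNReal.ofReal (exp (s/(2*a))) ^ (2:ℝ))
          = fun s => ENNReal.ofReal (exp (s/a)) := by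
        funext s
        rw [SD.ofReal_sq _ (exp_pos _).le, sq, hexpsq]
      have hci : IntegrableOn (fun s : ℝ => exp (s/a)) (Set.Ioc 0 x) volume :=
        (continuous_exp.comp (continuous_id.div_const a)).integrableOn_Ioc
      rw [e3, ← ofReal_integral_eq_lintegral_ofReal hci
        (Filter.Eventually.of_forall fun s => (exp_pos _).le)]
      apply ENNReal.ofReal_le_ofReal
      rw [← intervalIntegral.integral_of_le hx0, SD.integral_exp_div a ha]
      rw [zero_div, exp_zero]
      nlinarith [exp_pos (x/a), ha.le]
    have f2 : (fun s => ENNReal.ofReal (exp (s/(2*a)) * |g s|) ^ (2:ℝ))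
        = fun s => ENNReal.ofReal (exp (s/a)) * ENNReal.ofReal (g s ^ 2) := by
      funext s
      rw [SD.ofReal_sq _ (by positivity), mul_pow, sq_abs, sq, hexpsq,
        ENNReal.ofReal_mul (exp_pos _).le]
    rw [lintegral_congr (fun s => congrFun f2 s)]
    exact mul_le_mul_left (ENNReal.rpow_le_rpow f1 (by norm_num)) _
  -- square the claim
  have claim2 : (ENNReal.ofReal J) ^ (2:ℝ) ≤ ENNReal.ofReal (a * exp (x/a)) * L := by
    refine le_trans (ENNReal.rpow_le_rpow claim (by norm_num : (0:ℝ) ≤ 2)) (le_of_eq ?_)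
    rw [ENNReal.mul_rpow_of_nonneg _ _ (by norm_num : (0:ℝ) ≤ 2),
      ← ENNReal.rpow_mul, ← ENNReal.rpow_mul]
    norm_num
  -- assemble
  rw [SD.nnnorm_sq]
  have h1 : (exp (-x/a) * I)^2 ≤ exp (-x/a)^2 * J^2 := by
    rw [mul_pow]
    have : I^2 ≤ J^2 := by
      rw [← sq_abs I]
      exact pow_le_pow_left₀ (abs_nonneg _) habs 2
    nlinarith [sq_nonneg (exp (-x/a))]
  refine le_trans (ENNReal.ofReal_le_ofReal h1) ?_
  rw [ENNReal.ofReal_mul (sq_nonneg _), ← SD.ofReal_sq _ hJ0]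
  refine le_trans (mul_le_mul_right claim2 _) (le_of_eq ?_)
  rw [← mul_assoc, ← ENNReal.ofReal_mul (sq_nonneg _)]
  have hexp1 : exp (-x/a)^2 * (a * exp (x/a)) = a * exp (-x/a) := by
    have h2 : exp (-x/a) * exp (x/a) = 1 := by
      rw [← exp_add, neg_div, neg_add_cancel, exp_zero]
    have : exp (-x/a)^2 * (a * exp (x/a)) = a * exp (-x/a) * (exp (-x/a) * exp (x/a)) := by
      ring
    rw [this, h2, mul_one]
  rw [hexp1, ENNReal.ofReal_mul ha.le, mul_assoc]
  congr 1
  rw [hLdef, ← lintegral_const_mul' _ _ ENNReal.ofReal_ne_top]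
  apply lintegral_congr
  intro s
  rw [← mul_assoc, ← ENNReal.ofReal_mul (exp_pos _).le, ← exp_add]
  congr 3
  ring

lemma SD.sqrt_mul_self (c : ℝ≥0∞) : (c * c) ^ ((1:ℝ)/2) = c := by
  have h : c * c = c ^ (2:ℝ) := by
    rw [show (2:ℝ) = ((2:ℕ):ℝ) by norm_num, ENNReal.rpow_natCast, pow_two]
  rw [h, ← ENNReal.rpow_mul]
  norm_num

lemma SD.schur' (a : ℝ) (ha : 0 < a) (g : ℝ → ℝ) (hmeas : Measurable g)
    (hInt : IntegrableOn g (Set.Ioc (0:ℝ) 1) volume) :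
    eLpNorm (fun x => exp (-x/a) * ∫ s in (0:ℝ)..x, exp (s/a) * g s) 2 SD.mu
      ≤ ENNReal.ofReal a * eLpNorm g 2 SD.mu := by
  set N : ℝ → ℝ≥0∞ := fun s => ENNReal.ofReal (g s ^ 2) with hN
  set S : Set (ℝ × ℝ) := {p : ℝ × ℝ | 0 < p.2 ∧ p.2 ≤ p.1} with hS
  set φ : ℝ × ℝ → ℝ≥0∞ :=
    fun p => ENNReal.ofReal (exp ((p.2 - p.1)/a)) * N p.2 with hφ
  have hSmeas : MeasurableSet S :=
    (measurableSet_lt measurable_const measurable_snd).inter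
      (measurableSet_le measurable_snd measurable_fst)
  have hφmeas : Measurable φ := by
    apply Measurable.fun_mul
    · exact ENNReal.measurable_ofReal.comp
        (continuous_exp.comp ((continuous_snd.sub continuous_fst).div_const a)).measurable
    · exact ENNReal.measurable_ofReal.comp ((hmeas.comp measurable_snd).pow_const 2)
  have hNtop : ∀ s, N s ≠ ⊤ := fun s => ENNReal.ofReal_ne_top
  -- step 1 : pointwise bound integrated
  have step1 : (∫⁻ x, (‖exp (-x/a) * ∫ s in (0:ℝ)..x, exp (s/a) * g s‖₊ : ℝ≥0∞) ^ (2:ℝ) ∂SD.mu)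
      ≤ ENNReal.ofReal a * ∫⁻ x, (∫⁻ s, S.indicator φ (x, s) ∂SD.mu) ∂SD.mu := by
    rw [← lintegral_const_mul' _ _ ENNReal.ofReal_ne_top]
    apply lintegral_mono_ae
    show ∀ᵐ x ∂(volume.restrict (Set.Ioc 0 1)), _
    rw [ae_restrict_iff' measurableSet_Ioc]
    filter_upwards with x hx
    refine le_trans (SD.key a ha g hmeas hInt x hx) ?_
    have e1 : ∀ s, S.indicator φ (x, s)
        = (Set.Ioc 0 x).indicator (fun s => ENNReal.ofReal (exp ((s - x)/a)) * N s) s := by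
      intro s
      by_cases h : s ∈ Set.Ioc 0 x
      · rw [Set.indicator_of_mem h, Set.indicator_of_mem (show (x,s) ∈ S from ⟨h.1, h.2⟩)]
      · rw [Set.indicator_of_notMem h,
          Set.indicator_of_notMem (fun hc : (x,s) ∈ S => h ⟨hc.1, hc.2⟩)]
    have e2 : (∫⁻ s, S.indicator φ (x, s) ∂SD.mu)
        = ∫⁻ s in Set.Ioc 0 x, ENNReal.ofReal (exp ((s - x)/a)) * N s ∂volume := by
      rw [lintegral_congr e1, lintegral_indicator measurableSet_Ioc,
        show SD.mu = volume.restrict (Set.Ioc 0 1) from rfl,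
        Measure.restrict_restrict measurableSet_Ioc,
        Set.inter_eq_left.2 (Set.Ioc_subset_Ioc le_rfl hx.2)]
    rw [e2]
  -- step 2 : Tonelli
  have step2 : (∫⁻ x, (∫⁻ s, S.indicator φ (x, s) ∂SD.mu) ∂SD.mu)
      = ∫⁻ s, (∫⁻ x, S.indicator φ (x, s) ∂SD.mu) ∂SD.mu := by
    apply lintegral_lintegral_swap
    exact (hφmeas.indicator hSmeas).aemeasurable
  -- step 3 : inner bound
  have step3 : ∀ s ∈ Set.Ioc (0:ℝ) 1,
      (∫⁻ x, S.indicator φ (x, s) ∂SD.mu) ≤ ENNReal.ofReal a * N s := by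
    intro s hs
    have e2 : ∀ x, S.indicator φ (x, s)
        = (Set.Ici s).indicator (fun x => ENNReal.ofReal (exp ((s - x)/a)) * N s) x := by
      intro x
      by_cases h : s ≤ x
      · rw [Set.indicator_of_mem (show x ∈ Set.Ici s from h),
          Set.indicator_of_mem (show (x,s) ∈ S from ⟨hs.1, h⟩)]
      · rw [Set.indicator_of_notMem (fun hc : x ∈ Set.Ici s => h hc),
          Set.indicator_of_notMem (fun hc : (x,s) ∈ S => h hc.2)]
    have hset : Set.Ici s ∩ Set.Ioc 0 1 = Set.Icc s 1 :=
      Set.ext fun y => ⟨fun ⟨h1, _, h3⟩ => ⟨h1, h3⟩,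
        fun ⟨h1, h2⟩ => ⟨h1, lt_of_lt_of_le hs.1 h1, h2⟩⟩
    rw [lintegral_congr e2, lintegral_indicator measurableSet_Ici,
      show SD.mu = volume.restrict (Set.Ioc 0 1) from rfl,
      Measure.restrict_restrict measurableSet_Ici, hset]
    rw [lintegral_congr (fun x => mul_comm (ENNReal.ofReal (exp ((s - x)/a))) (N s)),
      lintegral_const_mul' _ _ (hNtop s)]
    rw [mul_comm (ENNReal.ofReal a) (N s)]
    apply mul_le_mul_right
    have hIcc : IntegrableOn (fun x : ℝ => exp ((s - x)/a)) (Set.Icc s 1) volume :=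
      (continuous_exp.comp ((continuous_const.sub continuous_id).div_const a)).integrableOn_Icc
    rw [← ofReal_integral_eq_lintegral_ofReal hIcc
      (Filter.Eventually.of_forall fun y => (exp_pos _).le)]
    apply ENNReal.ofReal_le_ofReal
    rw [integral_Icc_eq_integral_Ioc, ← intervalIntegral.integral_of_le hs.2,
      SD.integral_exp_sub a ha, sub_self, zero_div, exp_zero]
    nlinarith [exp_pos ((s-1)/a), ha.le]
  -- assemble
  rw [SD.eLpNorm_two, SD.eLpNorm_two]
  have egN : (∫⁻ s, (‖g s‖₊ : ℝ≥0∞) ^ (2:ℝ) ∂SD.mu) = ∫⁻ s, N s ∂SD.mu :=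
    lintegral_congr fun s => SD.nnnorm_sq (g s)
  have step4 : (∫⁻ s, (∫⁻ x, S.indicator φ (x, s) ∂SD.mu) ∂SD.mu)
      ≤ ENNReal.ofReal a * ∫⁻ s, N s ∂SD.mu := by
    rw [← lintegral_const_mul' _ _ ENNReal.ofReal_ne_top]
    apply lintegral_mono_ae
    show ∀ᵐ s ∂(volume.restrict (Set.Ioc 0 1)), _
    rw [ae_restrict_iff' measurableSet_Ioc]
    filter_upwards with s hs
    exact step3 s hs
  have total : (∫⁻ x, (‖exp (-x/a) * ∫ s in (0:ℝ)..x, exp (s/a) * g s‖₊ : ℝ≥0∞) ^ (2:ℝ) ∂SD.mu)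
      ≤ (ENNReal.ofReal a * ENNReal.ofReal a) * ∫⁻ s, (‖g s‖₊ : ℝ≥0∞) ^ (2:ℝ) ∂SD.mu := by
    rw [egN, mul_assoc]
    exact step1.trans (by rw [step2]; exact mul_le_mul_right step4 _)
  calc (∫⁻ x, (‖exp (-x/a) * ∫ s in (0:ℝ)..x, exp (s/a) * g s‖₊ : ℝ≥0∞) ^ (2:ℝ) ∂SD.mu) ^ ((1:ℝ)/2)
      ≤ ((ENNReal.ofReal a * ENNReal.ofReal a)
          * ∫⁻ s, (‖g s‖₊ : ℝ≥0∞) ^ (2:ℝ) ∂SD.mu) ^ ((1:ℝ)/2) :=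
        ENNReal.rpow_le_rpow total (by norm_num)
    _ = ENNReal.ofReal a * (∫⁻ s, (‖g s‖₊ : ℝ≥0∞) ^ (2:ℝ) ∂SD.mu) ^ ((1:ℝ)/2) := by
        rw [ENNReal.mul_rpow_of_nonneg _ _ (by norm_num : (0:ℝ) ≤ 1/2), SD.sqrt_mul_self]

lemma SD.schur (a : ℝ) (ha : 0 < a) (g : ℝ → ℝ) (hg : MemLp g 2 SD.mu) :
    eLpNorm (fun x => exp (-x/a) * ∫ s in (0:ℝ)..x, exp (s/a) * g s) 2 SD.mu
      ≤ ENNReal.ofReal a * eLpNorm g 2 SD.mu := by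
  set g' : ℝ → ℝ := hg.1.mk g with hg'def
  have hsm : StronglyMeasurable g' := hg.1.stronglyMeasurable_mk
  have heq : g =ᵐ[SD.mu] g' := hg.1.ae_eq_mk
  have hg'memℒp : MemLp g' 2 SD.mu := hg.ae_eq heq
  have hInt' : IntegrableOn g' (Set.Ioc 0 1) volume := hg'memℒp.integrable one_le_two
  have hIeq : ∀ x ∈ Set.Icc (0:ℝ) 1,
      (∫ s in (0:ℝ)..x, exp (s/a) * g s) = ∫ s in (0:ℝ)..x, exp (s/a) * g' s := by
    intro x hx
    apply intervalIntegral.integral_congr_ae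
    have h1 : ∀ᵐ s ∂volume.restrict (Set.Ioc 0 x), g s = g' s :=
      ae_restrict_of_ae_restrict_of_subset (Set.Ioc_subset_Ioc le_rfl hx.2) heq
    have h2 := (ae_restrict_iff' measurableSet_Ioc).1 h1
    filter_upwards [h2] with s h3 h4
    rw [h3 (by rwa [Set.uIoc_of_le hx.1] at h4)]
  have hfun : (fun x => exp (-x/a) * ∫ s in (0:ℝ)..x, exp (s/a) * g s)
      =ᵐ[SD.mu] (fun x => exp (-x/a) * ∫ s in (0:ℝ)..x, exp (s/a) * g' s) := by
    show ∀ᵐ x ∂volume.restrict (Set.Ioc 0 1), _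
    rw [ae_restrict_iff' measurableSet_Ioc]
    filter_upwards with x hx
    rw [hIeq x ⟨hx.1.le, hx.2⟩]
  rw [eLpNorm_congr_ae hfun, eLpNorm_congr_ae heq]
  exact SD.schur' a ha g' hsm.measurable hInt'

lemma SD.resolvent_formula {f : ℝ → ℝ} (hf : ContDiffOn ℝ 1 f (Set.Icc 0 1)) (hf0 : f 0 = 0)
    (a : ℝ) (ha : 0 < a) (x : ℝ) (hx : x ∈ Set.Icc (0:ℝ) 1) :
    ∫ s in (0:ℝ)..x, exp (s/a) * f s
      = a * exp (x/a) * f x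
        - a * ∫ s in (0:ℝ)..x, exp (s/a) * derivWithin f (Set.Icc 0 1) s := by
  set u₀ : ℝ → ℝ := fun s => derivWithin f (Set.Icc 0 1) s with hu₀
  have hu₀cont : ContinuousOn u₀ (Set.Icc 0 1) :=
    hf.continuousOn_derivWithin (uniqueDiffOn_Icc zero_lt_one) le_rfl
  have hfc : ContinuousOn f (Set.Icc 0 1) := hf.continuousOn
  have hsub : Set.Icc (0:ℝ) x ⊆ Set.Icc (0:ℝ) 1 := Set.Icc_subset_Icc le_rfl hx.2
  have hcont : ContinuousOn (fun s => a * exp (s/a) * f s) (Set.Icc 0 x) := by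
    exact ((continuous_const.mul (continuous_exp.comp
      (continuous_id.div_const a))).continuousOn).mul (hfc.mono hsub)
  have hintegrand : ContinuousOn
      (fun s => exp (s/a) * f s + a * exp (s/a) * u₀ s) (Set.Icc 0 x) := by
    exact (((continuous_exp.comp (continuous_id.div_const a)).continuousOn).mul
        (hfc.mono hsub)).add
      (((continuous_const.mul (continuous_exp.comp
        (continuous_id.div_const a))).continuousOn).mul (hu₀cont.mono hsub))
  have hderiv : ∀ s ∈ Set.Ioo (0:ℝ) x, HasDerivWithinAt (fun y => a * exp (y/a) * f y)
      (exp (s/a) * f s + a * exp (s/a) * u₀ s) (Set.Ioi s) s := by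
    intro s hs
    have hs1 : Set.Icc (0:ℝ) 1 ∈ nhds s :=
      Icc_mem_nhds hs.1 (lt_of_lt_of_le hs.2 hx.2)
    have hfd : DifferentiableAt ℝ f s :=
      (hf.differentiableOn one_ne_zero).differentiableAt hs1
    have hud : HasDerivAt f (u₀ s) s := by
      show HasDerivAt f (derivWithin f (Set.Icc 0 1) s) s
      rw [derivWithin_of_mem_nhds hs1]
      exact hfd.hasDerivAt
    have hexp : HasDerivAt (fun y : ℝ => a * exp (y/a)) (exp (s/a)) s := by
      have h1 : HasDerivAt (fun y : ℝ => y/a) (1/a) s := by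
        simpa using (hasDerivAt_id s).div_const a
      have h2 := (h1.exp).const_mul a
      refine h2.congr_deriv ?_
      field_simp
    have := hexp.fun_mul hud
    refine HasDerivAt.hasDerivWithinAt ?_
    convert this using 1
  have hFTC := intervalIntegral.integral_eq_sub_of_hasDeriv_right_of_le hx.1
    hcont hderiv
    (by
      apply ContinuousOn.intervalIntegrable
      rwa [Set.uIcc_of_le hx.1])
  have hi1 : IntervalIntegrable (fun s => exp (s/a) * f s) volume 0 x := by
    apply ContinuousOn.intervalIntegrable
    rw [Set.uIcc_of_le hx.1]
    exact ((continuous_exp.comp (continuous_id.div_const a)).continuousOn).mul (hfc.mono hsub)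
  have hi2 : IntervalIntegrable (fun s => a * (exp (s/a) * u₀ s)) volume 0 x := by
    apply ContinuousOn.intervalIntegrable
    rw [Set.uIcc_of_le hx.1]
    exact (continuous_const.continuousOn).mul
      (((continuous_exp.comp (continuous_id.div_const a)).continuousOn).mul (hu₀cont.mono hsub))
  have hsplit : (∫ s in (0:ℝ)..x, (exp (s/a) * f s + a * (exp (s/a) * u₀ s)))
      = (∫ s in (0:ℝ)..x, exp (s/a) * f s) + ∫ s in (0:ℝ)..x, a * (exp (s/a) * u₀ s) :=
    intervalIntegral.integral_add hi1 hi2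
  have heqfun : (∫ s in (0:ℝ)..x, (exp (s/a) * f s + a * exp (s/a) * u₀ s))
      = (∫ s in (0:ℝ)..x, (exp (s/a) * f s + a * (exp (s/a) * u₀ s))) := by
    apply intervalIntegral.integral_congr
    intro s _
    ring
  rw [heqfun] at hFTC
  rw [hsplit] at hFTC
  have hconst : (∫ s in (0:ℝ)..x, a * (exp (s/a) * u₀ s))
      = a * ∫ s in (0:ℝ)..x, exp (s/a) * u₀ s := intervalIntegral.integral_const_mul a _
  rw [hconst] at hFTC
  have hzero : a * exp ((0:ℝ)/a) * f 0 = 0 := by rw [hf0, mul_zero]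
  rw [hzero] at hFTC
  linarith [hFTC]

lemma SD.P_bound (u₀ : ℝ → ℝ) (hu : ContinuousOn u₀ (Set.Icc 0 1)) (M : ℝ) (hM : 0 ≤ M)
    (hMb : ∀ y ∈ Set.Icc (0:ℝ) 1, |u₀ y| ≤ M)
    (ε η : ℝ) (hε : 0 < ε) (hη : 0 < η)
    (hmod : ∀ s ∈ Set.Icc (0:ℝ) 1, ∀ y ∈ Set.Icc (0:ℝ) 1, |s - y| ≤ η → |u₀ s - u₀ y| ≤ ε)
    (a : ℝ) (ha : 0 < a) (x : ℝ) (hx : x ∈ Set.Ioc (0:ℝ) 1) :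
    |a⁻¹ * exp (-x/a) * (∫ s in (0:ℝ)..x, exp (s/a) * u₀ s) - u₀ x * (1 - exp (-x/a))|
      ≤ ε + 2*M*exp (-η/a) := by
  have hx0 : (0:ℝ) ≤ x := hx.1.le
  have hx1 : x ≤ 1 := hx.2
  have hxI : x ∈ Set.Icc (0:ℝ) 1 := ⟨hx0, hx1⟩
  set c : ℝ := max 0 (x - η) with hcdef
  have hc0 : 0 ≤ c := le_max_left _ _
  have hcx : c ≤ x := max_le hx0 (by linarith)
  have hc1 : c ≤ 1 := hcx.trans hx1
  have hcI : c ∈ Set.Icc (0:ℝ) 1 := ⟨hc0, hc1⟩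
  have hcxη : x - c ≤ η := by
    have := le_max_right 0 (x - η)
    linarith
  have hconte : Continuous (fun s : ℝ => exp (s/a)) :=
    continuous_exp.comp (continuous_id.div_const a)
  have hΔcont : ContinuousOn (fun s => exp (s/a) * |u₀ s - u₀ x|) (Set.Icc 0 1) :=
    (hconte.continuousOn).mul ((hu.sub continuousOn_const).abs)
  have hi_main : IntervalIntegrable (fun s => exp (s/a) * u₀ s) volume 0 x := by
    apply ContinuousOn.intervalIntegrable
    rw [Set.uIcc_of_le hx0]
    exact (hconte.continuousOn).mul (hu.mono (Set.Icc_subset_Icc le_rfl hx1))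
  have hi_sub : IntervalIntegrable (fun s => exp (s/a) * (u₀ s - u₀ x)) volume 0 x := by
    apply ContinuousOn.intervalIntegrable
    rw [Set.uIcc_of_le hx0]
    exact (hconte.continuousOn).mul
      ((hu.mono (Set.Icc_subset_Icc le_rfl hx1)).sub continuousOn_const)
  have hi_c : IntervalIntegrable (fun s => exp (s/a) * u₀ x) volume 0 x :=
    (hconte.mul continuous_const).intervalIntegrable 0 x
  have hi_Δ1 : IntervalIntegrable (fun s => exp (s/a) * |u₀ s - u₀ x|) volume 0 c := by
    apply ContinuousOn.intervalIntegrable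
    rw [Set.uIcc_of_le hc0]
    exact hΔcont.mono (Set.Icc_subset_Icc le_rfl hc1)
  have hi_Δ2 : IntervalIntegrable (fun s => exp (s/a) * |u₀ s - u₀ x|) volume c x := by
    apply ContinuousOn.intervalIntegrable
    rw [Set.uIcc_of_le hcx]
    exact hΔcont.mono (Set.Icc_subset_Icc hc0 hx1)
  have h2 : exp (-x/a) * exp (x/a) = 1 := by
    rw [← exp_add, neg_div, neg_add_cancel, exp_zero]
  have hintexp : (∫ s in (0:ℝ)..x, exp (s/a)) = a * (exp (x/a) - 1) := by
    rw [SD.integral_exp_div a ha, zero_div, exp_zero]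
  set K : ℝ := ∫ s in (0:ℝ)..x, exp (s/a) * (u₀ s - u₀ x) with hKdef
  have hK : (∫ s in (0:ℝ)..x, exp (s/a) * u₀ s)
      = K + u₀ x * (a * (exp (x/a) - 1)) := by
    have hsub2 : K = (∫ s in (0:ℝ)..x, exp (s/a) * u₀ s)
        - ∫ s in (0:ℝ)..x, exp (s/a) * u₀ x := by
      rw [hKdef, ← intervalIntegral.integral_sub hi_main hi_c]
      apply intervalIntegral.integral_congr
      intro s _
      ring
    have hconstint : (∫ s in (0:ℝ)..x, exp (s/a) * u₀ x)
        = u₀ x * (a * (exp (x/a) - 1)) := by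
      rw [intervalIntegral.integral_mul_const, hintexp]
      ring
    rw [hconstint] at hsub2
    linarith [hsub2]
  -- rewrite target as a⁻¹ * exp(-x/a) * |K|
  have hmain_eq : a⁻¹ * exp (-x/a) * (∫ s in (0:ℝ)..x, exp (s/a) * u₀ s)
      - u₀ x * (1 - exp (-x/a)) = a⁻¹ * exp (-x/a) * K := by
    rw [hK]
    have : a⁻¹ * exp (-x/a) * (K + u₀ x * (a * (exp (x/a) - 1)))
        = a⁻¹ * exp (-x/a) * K
          + (a⁻¹ * a) * u₀ x * (exp (-x/a) * exp (x/a) - exp (-x/a)) := by ring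
    rw [this, inv_mul_cancel₀ ha.ne', h2]
    ring
  rw [hmain_eq, abs_mul, abs_mul, abs_of_nonneg (inv_nonneg.2 ha.le), abs_of_pos (exp_pos _)]
  -- bound |K|
  have habsK : |K| ≤ ∫ s in (0:ℝ)..x, exp (s/a) * |u₀ s - u₀ x| := by
    refine le_trans (intervalIntegral.abs_integral_le_integral_abs hx0) (le_of_eq ?_)
    apply intervalIntegral.integral_congr
    intro s _
    dsimp only
    rw [abs_mul, abs_of_pos (exp_pos _)]
  have hsplitΔ : (∫ s in (0:ℝ)..x, exp (s/a) * |u₀ s - u₀ x|)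
      = (∫ s in (0:ℝ)..c, exp (s/a) * |u₀ s - u₀ x|)
        + ∫ s in c..x, exp (s/a) * |u₀ s - u₀ x| :=
    (intervalIntegral.integral_add_adjacent_intervals hi_Δ1 hi_Δ2).symm
  have hb1 : (∫ s in (0:ℝ)..c, exp (s/a) * |u₀ s - u₀ x|)
      ≤ 2*M * (a * (exp (c/a) - 1)) := by
    have hmono : (∫ s in (0:ℝ)..c, exp (s/a) * |u₀ s - u₀ x|)
        ≤ ∫ s in (0:ℝ)..c, exp (s/a) * (2*M) := by
      apply intervalIntegral.integral_mono_on hc0 hi_Δ1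
        ((hconte.mul continuous_const).intervalIntegrable 0 c)
      intro s hs
      have hsI : s ∈ Set.Icc (0:ℝ) 1 := ⟨hs.1, hs.2.trans hc1⟩
      have : |u₀ s - u₀ x| ≤ 2*M := by
        calc |u₀ s - u₀ x| ≤ |u₀ s| + |u₀ x| := abs_sub _ _
          _ ≤ M + M := add_le_add (hMb s hsI) (hMb x hxI)
          _ = 2*M := by ring
      exact mul_le_mul_of_nonneg_left this (exp_pos _).le
    calc (∫ s in (0:ℝ)..c, exp (s/a) * |u₀ s - u₀ x|)
        ≤ ∫ s in (0:ℝ)..c, exp (s/a) * (2*M) := hmono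
      _ = 2*M * (a * (exp (c/a) - 1)) := by
          rw [intervalIntegral.integral_mul_const, SD.integral_exp_div a ha,
            zero_div, exp_zero]
          ring
  have hb2 : (∫ s in c..x, exp (s/a) * |u₀ s - u₀ x|)
      ≤ ε * (a * (exp (x/a) - exp (c/a))) := by
    have hmono : (∫ s in c..x, exp (s/a) * |u₀ s - u₀ x|)
        ≤ ∫ s in c..x, exp (s/a) * ε := by
      apply intervalIntegral.integral_mono_on hcx hi_Δ2
        ((hconte.mul continuous_const).intervalIntegrable c x)
      intro s hs
      have hsI : s ∈ Set.Icc (0:ℝ) 1 := ⟨hc0.trans hs.1, hs.2.trans hx1⟩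
      have hdist : |s - x| ≤ η := by
        rw [abs_of_nonpos (by linarith [hs.2])]
        have := hs.1
        linarith
      exact mul_le_mul_of_nonneg_left (hmod s hsI x hxI hdist) (exp_pos _).le
    calc (∫ s in c..x, exp (s/a) * |u₀ s - u₀ x|)
        ≤ ∫ s in c..x, exp (s/a) * ε := hmono
      _ = ε * (a * (exp (x/a) - exp (c/a))) := by
          rw [intervalIntegral.integral_mul_const, SD.integral_exp_div a ha]
          ring
  have hKtot : |K| ≤ 2*M * (a * (exp (c/a) - 1)) + ε * (a * (exp (x/a) - exp (c/a))) := by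
    rw [hsplitΔ] at habsK
    linarith [hb1, hb2]
  -- final estimate
  have hecx : exp (-x/a) * exp (c/a) = exp ((c - x)/a) := by
    rw [← exp_add]; congr 1; ring
  have hεpart : a⁻¹ * exp (-x/a) * (ε * (a * (exp (x/a) - exp (c/a)))) ≤ ε := by
    have h3 : a⁻¹ * exp (-x/a) * (ε * (a * (exp (x/a) - exp (c/a))))
        = ε * ((a⁻¹ * a) * (exp (-x/a) * exp (x/a) - exp (-x/a) * exp (c/a))) := by ring
    rw [h3, inv_mul_cancel₀ ha.ne', h2, hecx, one_mul]
    nlinarith [mul_pos hε (exp_pos ((c - x)/a))]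
  have hMpart : a⁻¹ * exp (-x/a) * (2*M * (a * (exp (c/a) - 1))) ≤ 2*M*exp (-η/a) := by
    have h3 : a⁻¹ * exp (-x/a) * (2*M * (a * (exp (c/a) - 1)))
        = 2*M * ((a⁻¹ * a) * (exp (-x/a) * exp (c/a) - exp (-x/a))) := by ring
    rw [h3, inv_mul_cancel₀ ha.ne', hecx, one_mul]
    have h4 : exp ((c - x)/a) - exp (-x/a) ≤ exp (-η/a) := by
      rcases le_or_gt (x - η) 0 with h | h
      · have hceq : c = 0 := max_eq_left (by linarith)
        have h5 : exp ((c - x)/a) = exp (-x/a) := by rw [hceq]; congr 1; ring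
        rw [h5, sub_self]
        positivity
      · have hceq : c = x - η := max_eq_right (by linarith)
        have h5 : exp ((c - x)/a) = exp (-η/a) := by rw [hceq]; congr 1; ring
        rw [h5]
        linarith [exp_pos (-x/a)]
    exact mul_le_mul_of_nonneg_left h4 (by linarith)
  calc a⁻¹ * exp (-x/a) * |K|
      ≤ a⁻¹ * exp (-x/a) * (2*M * (a * (exp (c/a) - 1)) + ε * (a * (exp (x/a) - exp (c/a)))) := by
        apply mul_le_mul_of_nonneg_left hKtot
        positivity
    _ = a⁻¹ * exp (-x/a) * (2*M * (a * (exp (c/a) - 1)))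
        + a⁻¹ * exp (-x/a) * (ε * (a * (exp (x/a) - exp (c/a)))) := by ring
    _ ≤ 2*M*exp (-η/a) + ε := add_le_add hMpart hεpart
    _ = ε + 2*M*exp (-η/a) := by ring

lemma SD.approx (u₀ : ℝ → ℝ) (hu : ContinuousOn u₀ (Set.Icc 0 1)) :
    Tendsto (fun a : ℝ => eLpNorm
      (fun x => a⁻¹ * exp (-x/a) * (∫ s in (0:ℝ)..x, exp (s/a) * u₀ s) - u₀ x) 2 SD.mu)
      (nhdsWithin 0 (Set.Ioi 0)) (nhds 0) := by
  have hμuniv : SD.mu Set.univ = 1 := by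
    show volume.restrict (Set.Ioc (0:ℝ) 1) Set.univ = 1
    rw [Measure.restrict_apply MeasurableSet.univ, Set.univ_inter, Real.volume_Ioc]
    norm_num
  obtain ⟨C, hC⟩ := isCompact_Icc.exists_bound_of_continuousOn hu
  set M : ℝ := max C 0 with hMdef
  have hM : 0 ≤ M := le_max_right _ _
  have hMb : ∀ y ∈ Set.Icc (0:ℝ) 1, |u₀ y| ≤ M := fun y hy =>
    le_trans (by rw [← Real.norm_eq_abs]; exact hC y hy) (le_max_left _ _)
  rw [ENNReal.tendsto_nhds_zero]
  have H : ∀ ε' : ℝ, 0 < ε' → ∀ᶠ a in nhdsWithin (0:ℝ) (Set.Ioi 0),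
      eLpNorm (fun x => a⁻¹ * exp (-x/a) * (∫ s in (0:ℝ)..x, exp (s/a) * u₀ s) - u₀ x)
        2 SD.mu ≤ ENNReal.ofReal (3*ε') := by
    intro ε' hε'
    -- modulus of continuity
    obtain ⟨η, hη, hmod0⟩ := Metric.uniformContinuousOn_iff_le.1
      (isCompact_Icc.uniformContinuousOn_of_continuous hu) ε' hε'
    have hmod : ∀ s ∈ Set.Icc (0:ℝ) 1, ∀ y ∈ Set.Icc (0:ℝ) 1, |s - y| ≤ η →
        |u₀ s - u₀ y| ≤ ε' := by
      intro s hs y hy hd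
      have := hmod0 s hs y hy (by rwa [Real.dist_eq])
      rwa [Real.dist_eq] at this
    -- eventual facts
    have hev1 : ∀ᶠ a in nhdsWithin (0:ℝ) (Set.Ioi 0), 0 < a :=
      eventually_mem_nhdsWithin
    have htend2 : Tendsto (fun a : ℝ => 2*M*exp (-η/a))
        (nhdsWithin (0:ℝ) (Set.Ioi 0)) (nhds 0) := by
      have h2 : Tendsto (fun a : ℝ => η/a) (nhdsWithin (0:ℝ) (Set.Ioi 0)) atTop := by
        have := tendsto_inv_nhdsGT_zero (𝕜 := ℝ)
        simpa [div_eq_mul_inv] using this.const_mul_atTop hη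
      have h1 : Tendsto (fun a : ℝ => -η/a) (nhdsWithin (0:ℝ) (Set.Ioi 0)) atBot := by
        have := tendsto_neg_atTop_atBot.comp h2
        simpa [Function.comp_def, neg_div] using this
      have h3 : Tendsto (fun a : ℝ => exp (-η/a))
          (nhdsWithin (0:ℝ) (Set.Ioi 0)) (nhds 0) := Real.tendsto_exp_atBot.comp h1
      have := h3.const_mul (2*M)
      simpa using this
    have hev2 : ∀ᶠ a in nhdsWithin (0:ℝ) (Set.Ioi 0), 2*M*exp (-η/a) ≤ ε' :=
      htend2.eventually (eventually_le_nhds hε')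
    have hcpos : (0:ℝ) < ε'^2/(M^2+1) := by positivity
    have hev3 : ∀ᶠ a in nhdsWithin (0:ℝ) (Set.Ioi 0), a ≤ ε'^2/(M^2+1) :=
      ((eventually_le_nhds hcpos).filter_mono nhdsWithin_le_nhds)
    filter_upwards [hev1, hev2, hev3] with a ha hb hc
    -- decompose
    set P : ℝ → ℝ := fun x =>
      a⁻¹ * exp (-x/a) * (∫ s in (0:ℝ)..x, exp (s/a) * u₀ s) - u₀ x * (1 - exp (-x/a))
      with hPdef
    set Q : ℝ → ℝ := fun x => -(u₀ x * exp (-x/a)) with hQdef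
    have h_decomp : (fun x => a⁻¹ * exp (-x/a) * (∫ s in (0:ℝ)..x, exp (s/a) * u₀ s) - u₀ x)
        = fun x => P x + Q x := by
      funext x
      rw [hPdef, hQdef]
      ring
    -- continuity of the primitive
    have hconte : Continuous (fun s : ℝ => exp (s/a)) :=
      continuous_exp.comp (continuous_id.div_const a)
    have hint_Icc : IntegrableOn (fun s => exp (s/a) * u₀ s) (Set.Icc 0 1) volume :=
      ((hconte.continuousOn).mul hu).integrableOn_compact isCompact_Icc
    have hprim_cont : ContinuousOn (fun x => ∫ s in (0:ℝ)..x, exp (s/a) * u₀ s)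
        (Set.Icc 0 1) := by
      apply (intervalIntegral.continuousOn_primitive hint_Icc).congr
      intro x hx
      exact intervalIntegral.integral_of_le hx.1
    have hexpcont : Continuous (fun x : ℝ => exp (-x/a)) :=
      continuous_exp.comp ((continuous_neg).div_const a)
    have hPcont : ContinuousOn P (Set.Icc 0 1) := by
      apply ContinuousOn.sub
      · exact ((continuous_const.mul hexpcont).continuousOn).mul hprim_cont
      · exact hu.mul ((continuous_const.sub hexpcont).continuousOn)
    have hQcont : ContinuousOn Q (Set.Icc 0 1) :=
      (hu.mul hexpcont.continuousOn).neg
    have hPaesm : AEStronglyMeasurable P SD.mu :=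
      (hPcont.mono Set.Ioc_subset_Icc_self).aestronglyMeasurable measurableSet_Ioc
    have hQaesm : AEStronglyMeasurable Q SD.mu :=
      (hQcont.mono Set.Ioc_subset_Icc_self).aestronglyMeasurable measurableSet_Ioc
    -- bound for P
    have hPbound : eLpNorm P 2 SD.mu ≤ ENNReal.ofReal (2*ε') := by
      have hPb : ∀ᵐ x ∂SD.mu, ‖P x‖ ≤ ε' + 2*M*exp (-η/a) := by
        show ∀ᵐ x ∂volume.restrict (Set.Ioc 0 1), _
        rw [ae_restrict_iff' measurableSet_Ioc]
        filter_upwards with x hx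
        rw [Real.norm_eq_abs]
        exact SD.P_bound u₀ hu M hM hMb ε' η hε' hη hmod a ha x hx
      refine le_trans (eLpNorm_le_of_ae_bound hPb) ?_
      rw [hμuniv, ENNReal.one_rpow, one_mul]
      apply ENNReal.ofReal_le_ofReal
      linarith
    -- bound for Q
    have hQbound : eLpNorm Q 2 SD.mu ≤ ENNReal.ofReal ε' := by
      have hQle : (∫⁻ x, (‖Q x‖₊ : ℝ≥0∞) ^ (2:ℝ) ∂SD.mu) ≤ ENNReal.ofReal (M^2 * (a/2)) := by
        have step_a : (∫⁻ x, (‖Q x‖₊ : ℝ≥0∞) ^ (2:ℝ) ∂SD.mu)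
            ≤ ∫⁻ x, ENNReal.ofReal (M^2 * exp ((0 - x)/(a/2))) ∂SD.mu := by
          apply lintegral_mono_ae
          show ∀ᵐ x ∂volume.restrict (Set.Ioc 0 1), _
          rw [ae_restrict_iff' measurableSet_Ioc]
          filter_upwards with x hx
          rw [SD.nnnorm_sq]
          apply ENNReal.ofReal_le_ofReal
          have he : exp (-x/a)^2 = exp ((0 - x)/(a/2)) := by
            rw [sq, ← exp_add]
            congr 1
            field_simp
            ring
          have hu2 : u₀ x^2 ≤ M^2 := by
            rw [← sq_abs]
            apply pow_le_pow_left₀ (abs_nonneg _) (hMb x ⟨hx.1.le, hx.2⟩)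
          rw [hQdef]
          calc (-(u₀ x * exp (-x/a)))^2 = u₀ x^2 * exp (-x/a)^2 := by ring
            _ ≤ M^2 * exp (-x/a)^2 := by
                apply mul_le_mul_of_nonneg_right hu2 (sq_nonneg _)
            _ = M^2 * exp ((0 - x)/(a/2)) := by rw [he]
        have hcint : IntegrableOn (fun x : ℝ => M^2 * exp ((0 - x)/(a/2)))
            (Set.Ioc 0 1) volume :=
          (continuous_const.mul (continuous_exp.comp
            ((continuous_const.sub continuous_id).div_const (a/2)))).integrableOn_Ioc
        have step_b : (∫⁻ x, ENNReal.ofReal (M^2 * exp ((0 - x)/(a/2))) ∂SD.mu)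
            = ENNReal.ofReal (∫ x in Set.Ioc (0:ℝ) 1, M^2 * exp ((0 - x)/(a/2))) := by
          show (∫⁻ x in Set.Ioc (0:ℝ) 1, _ ∂volume) = _
          rw [← ofReal_integral_eq_lintegral_ofReal hcint
            (Filter.Eventually.of_forall fun x => by positivity)]
        have step_c : (∫ x in Set.Ioc (0:ℝ) 1, M^2 * exp ((0 - x)/(a/2)))
            ≤ M^2 * (a/2) := by
          rw [← intervalIntegral.integral_of_le zero_le_one,
            intervalIntegral.integral_const_mul, SD.integral_exp_sub (a/2) (by linarith),
            sub_self, zero_div, exp_zero]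
          have h6 : (0:ℝ) < exp ((0 - 1)/(a/2)) := exp_pos _
          nlinarith [mul_nonneg (mul_nonneg (sq_nonneg M)
            (by linarith : (0:ℝ) ≤ a/2)) h6.le]
        calc (∫⁻ x, (‖Q x‖₊ : ℝ≥0∞) ^ (2:ℝ) ∂SD.mu)
            ≤ ∫⁻ x, ENNReal.ofReal (M^2 * exp ((0 - x)/(a/2))) ∂SD.mu := step_a
          _ = ENNReal.ofReal (∫ x in Set.Ioc (0:ℝ) 1, M^2 * exp ((0 - x)/(a/2))) := step_b
          _ ≤ ENNReal.ofReal (M^2 * (a/2)) := ENNReal.ofReal_le_ofReal step_c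
      have hsq : M^2 * (a/2) ≤ ε'^2 := by
        have ht0 : (0:ℝ) ≤ ε'^2/(M^2+1) := le_of_lt hcpos
        have hteq : ε'^2 = (ε'^2/(M^2+1)) * (M^2+1) := by field_simp
        nlinarith [mul_le_mul_of_nonneg_left hc (sq_nonneg M), ht0, ha.le, sq_nonneg M]
      rw [SD.eLpNorm_two]
      calc (∫⁻ x, (‖Q x‖₊ : ℝ≥0∞) ^ (2:ℝ) ∂SD.mu) ^ ((1:ℝ)/2)
          ≤ (ENNReal.ofReal (ε'^2)) ^ ((1:ℝ)/2) :=
            ENNReal.rpow_le_rpow (hQle.trans (ENNReal.ofReal_le_ofReal hsq)) (by norm_num)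
        _ = ENNReal.ofReal ε' := by
            rw [← SD.ofReal_sq ε' hε'.le, ← ENNReal.rpow_mul]
            norm_num
    -- combine
    rw [h_decomp]
    calc eLpNorm (fun x => P x + Q x) 2 SD.mu
        ≤ eLpNorm P 2 SD.mu + eLpNorm Q 2 SD.mu := eLpNorm_add_le hPaesm hQaesm one_le_two
      _ ≤ ENNReal.ofReal (2*ε') + ENNReal.ofReal ε' :=
          add_le_add hPbound hQbound
      _ = ENNReal.ofReal (3*ε') := by
          rw [← ENNReal.ofReal_add (by linarith) hε'.le]
          ring_nf
  intro ε hε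
  rcases eq_or_ne ε ⊤ with rfl | hne
  · exact Filter.Eventually.of_forall fun _ => le_top
  · have hε' : 0 < ε.toReal / 6 := by
      have := ENNReal.toReal_pos hε.ne' hne
      linarith
    filter_upwards [H (ε.toReal/6) hε'] with a haa
    refine haa.trans ?_
    have h8 : (3:ℝ) * (ε.toReal/6) ≤ ε.toReal := by linarith [ENNReal.toReal_nonneg (a := ε)]
    calc ENNReal.ofReal (3*(ε.toReal/6)) ≤ ENNReal.ofReal ε.toReal :=
        ENNReal.ofReal_le_ofReal h8
      _ = ε := ENNReal.ofReal_toReal hne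

lemma SD.mu_univ : SD.mu Set.univ = 1 := by
  show volume.restrict (Set.Ioc (0:ℝ) 1) Set.univ = 1
  rw [Measure.restrict_apply MeasurableSet.univ, Set.univ_inter, Real.volume_Ioc]
  norm_num

lemma SD.memL2_of_continuousOn {v : ℝ → ℝ} (hv : ContinuousOn v (Set.Icc 0 1)) :
    MemLp v 2 SD.mu := by
  obtain ⟨C, hC⟩ := isCompact_Icc.exists_bound_of_continuousOn hv
  constructor
  · exact (hv.mono Set.Ioc_subset_Icc_self).aestronglyMeasurable measurableSet_Ioc
  · have hb : ∀ᵐ x ∂SD.mu, ‖v x‖ ≤ max C 0 := by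
      show ∀ᵐ x ∂volume.restrict (Set.Ioc 0 1), _
      rw [ae_restrict_iff' measurableSet_Ioc]
      filter_upwards with x hx
      exact le_trans (hC x ⟨hx.1.le, hx.2⟩) (le_max_left _ _)
    refine lt_of_le_of_lt (eLpNorm_le_of_ae_bound hb) ?_
    rw [SD.mu_univ, ENNReal.one_rpow, one_mul]
    exact ENNReal.ofReal_lt_top

/-- Convergence theorem for stable differentiation: `f ∈ C¹([0,1])`, `f(0)=0`,
`u = f′`, noisy data `f_δ` with `‖f_δ − f‖ ≤ δ` for `δ ∈ (0,δ₀)`, and a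
regularization parameter `α(δ) > 0` with `α(δ) → 0`, `δ/α(δ) → 0` as `δ → 0`.
Then `u_δ := (α(δ)I + A)⁻¹ f_δ` (given by the explicit solution formula)
satisfies `‖u_δ − u‖ → 0` as `δ → 0`. -/
theorem stable_differentiation_convergence
    (f : ℝ → ℝ) (hf : ContDiffOn ℝ 1 f (Set.Icc 0 1)) (hf0 : f 0 = 0)
    (δ₀ : ℝ) (hδ₀ : 0 < δ₀) (fδ : ℝ → ℝ → ℝ) (α : ℝ → ℝ)
    (hfδmem : ∀ δ ∈ Set.Ioo 0 δ₀, MemLp (fδ δ) 2 (volume.restrict (Set.Ioc 0 1)))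
    (hnoise : ∀ δ ∈ Set.Ioo 0 δ₀,
      eLpNorm (fδ δ - f) 2 (volume.restrict (Set.Ioc 0 1)) ≤ ENNReal.ofReal δ)
    (hαpos : ∀ δ ∈ Set.Ioo 0 δ₀, 0 < α δ)
    (hα0 : Tendsto α (nhdsWithin 0 (Set.Ioi 0)) (nhds 0))
    (hδα : Tendsto (fun δ => δ / α δ) (nhdsWithin 0 (Set.Ioi 0)) (nhds 0)) :
    Tendsto (fun δ =>
        eLpNorm (fun x =>
            (fδ δ x / α δ -
              (α δ)⁻¹ ^ 2 * exp (-x / α δ) * ∫ s in (0:ℝ)..x, exp (s / α δ) * fδ δ s)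
              - deriv f x) 2 (volume.restrict (Set.Ioc 0 1)))
      (nhdsWithin 0 (Set.Ioi 0)) (nhds 0) := by
  have hmueq : volume.restrict (Set.Ioc (0:ℝ) 1) = SD.mu := rfl
  simp only [hmueq]
  set u₀ : ℝ → ℝ := fun x => derivWithin f (Set.Icc 0 1) x with hu₀def
  have hu₀cont : ContinuousOn u₀ (Set.Icc 0 1) :=
    hf.continuousOn_derivWithin (uniqueDiffOn_Icc zero_lt_one) le_rfl
  set E : ℝ → ℝ≥0∞ := fun a => eLpNorm
    (fun x => a⁻¹ * exp (-x/a) * (∫ s in (0:ℝ)..x, exp (s/a) * u₀ s) - u₀ x) 2 SD.mu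
    with hEdef
  have hIoo : Set.Ioo (0:ℝ) δ₀ ∈ nhdsWithin (0:ℝ) (Set.Ioi 0) :=
    Ioo_mem_nhdsGT_of_mem ⟨le_refl 0, hδ₀⟩
  -- the two tendsto facts
  have h1 : Tendsto (fun δ => ENNReal.ofReal (2*(δ/α δ)))
      (nhdsWithin (0:ℝ) (Set.Ioi 0)) (nhds 0) := by
    have h0' : Tendsto (fun δ => 2*(δ/α δ)) (nhdsWithin (0:ℝ) (Set.Ioi 0)) (nhds 0) := by
      simpa using hδα.const_mul 2
    have := ENNReal.tendsto_ofReal h0'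
    simpa using this
  have h2 : Tendsto (fun δ => E (α δ)) (nhdsWithin (0:ℝ) (Set.Ioi 0)) (nhds 0) := by
    have hαpos' : ∀ᶠ δ in nhdsWithin (0:ℝ) (Set.Ioi 0), α δ ∈ Set.Ioi (0:ℝ) := by
      filter_upwards [hIoo] with δ hδ
      exact hαpos δ hδ
    have hα' : Tendsto α (nhdsWithin (0:ℝ) (Set.Ioi 0)) (nhdsWithin (0:ℝ) (Set.Ioi 0)) :=
      tendsto_nhdsWithin_iff.2 ⟨hα0, hαpos'⟩
    exact (SD.approx u₀ hu₀cont).comp hα'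
  have hsum : Tendsto (fun δ => ENNReal.ofReal (2*(δ/α δ)) + E (α δ))
      (nhdsWithin (0:ℝ) (Set.Ioi 0)) (nhds 0) := by
    have := h1.add h2
    simpa using this
  -- the eventual bound
  have hle : ∀ᶠ δ in nhdsWithin (0:ℝ) (Set.Ioi 0),
      eLpNorm (fun x =>
          (fδ δ x / α δ -
            (α δ)⁻¹ ^ 2 * exp (-x / α δ) * ∫ s in (0:ℝ)..x, exp (s / α δ) * fδ δ s)
            - deriv f x) 2 SD.mu
        ≤ ENNReal.ofReal (2*(δ/α δ)) + E (α δ) := by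
    filter_upwards [hIoo] with δ hδ
    have ha : 0 < α δ := hαpos δ hδ
    set a : ℝ := α δ with hadef
    set g : ℝ → ℝ := fun s => fδ δ s - f s with hgdef
    have hfmem : MemLp f 2 SD.mu := SD.memL2_of_continuousOn hf.continuousOn
    have hgmem : MemLp g 2 SD.mu := (hfδmem δ hδ).sub hfmem
    have hgnorm : eLpNorm g 2 SD.mu ≤ ENNReal.ofReal δ := hnoise δ hδ
    have hgInt : IntegrableOn g (Set.Ioc 0 1) volume := hgmem.integrable one_le_two
    have h2exp : ∀ x : ℝ, exp (-x/a) * exp (x/a) = 1 := fun x => by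
      rw [← exp_add, neg_div, neg_add_cancel, exp_zero]
    set R1 : ℝ → ℝ := fun x =>
      g x / a - a⁻¹^2 * (exp (-x/a) * ∫ s in (0:ℝ)..x, exp (s/a) * g s) with hR1def
    set R2 : ℝ → ℝ := fun x =>
      a⁻¹ * exp (-x/a) * (∫ s in (0:ℝ)..x, exp (s/a) * u₀ s) - u₀ x with hR2def
    -- a.e. decomposition
    have hae : (fun x =>
        (fδ δ x / a - a⁻¹ ^ 2 * exp (-x / a) * ∫ s in (0:ℝ)..x, exp (s / a) * fδ δ s)
          - deriv f x) =ᵐ[SD.mu] fun x => R1 x + R2 x := by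
      have h0 : ∀ᵐ x ∂SD.mu, x ∈ Set.Ioc (0:ℝ) 1 := ae_restrict_mem measurableSet_Ioc
      have h1' : ∀ᵐ x ∂SD.mu, x ≠ 1 := by
        apply ae_iff.2
        have : {x : ℝ | ¬ x ≠ 1} = {1} := by ext y; simp
        rw [this]
        exact measure_mono_null (fun y hy => hy)
          (le_antisymm (le_trans (Measure.restrict_le_self _)
            (le_of_eq Real.volume_singleton)) zero_le)
      filter_upwards [h0, h1'] with x hx hne
      have hxIoo : x ∈ Set.Ioo (0:ℝ) 1 := ⟨hx.1, lt_of_le_of_ne hx.2 hne⟩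
      have hxIcc : x ∈ Set.Icc (0:ℝ) 1 := ⟨hx.1.le, hx.2⟩
      have hderiv_eq : deriv f x = u₀ x := by
        show _ = derivWithin f (Set.Icc 0 1) x
        rw [derivWithin_of_mem_nhds (Icc_mem_nhds hxIoo.1 hxIoo.2)]
      have hif : IntervalIntegrable (fun s => exp (s/a) * f s) volume 0 x := by
        apply ContinuousOn.intervalIntegrable
        rw [Set.uIcc_of_le hx.1.le]
        exact ((continuous_exp.comp (continuous_id.div_const a)).continuousOn).mul
          (hf.continuousOn.mono (Set.Icc_subset_Icc le_rfl hx.2))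
      have hig : IntervalIntegrable (fun s => exp (s/a) * g s) volume 0 x :=
        SD.intInt hgInt a x hxIcc
      have hsplit : (∫ s in (0:ℝ)..x, exp (s/a) * fδ δ s)
          = (∫ s in (0:ℝ)..x, exp (s/a) * f s) + ∫ s in (0:ℝ)..x, exp (s/a) * g s := by
        rw [← intervalIntegral.integral_add hif hig]
        apply intervalIntegral.integral_congr
        intro s _
        dsimp only
        rw [hgdef]
        ring
      have hres := SD.resolvent_formula hf hf0 a ha x hxIcc
      have hfx : fδ δ x = f x + g x := by rw [hgdef]; ring
      rw [hsplit, hderiv_eq, hres, hfx, hR1def, hR2def]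
      have hinv : a⁻¹ * a = 1 := inv_mul_cancel₀ ha.ne'
      linear_combination (-(a⁻¹ * f x)) * h2exp x
        + (a⁻¹ * exp (-x/a) * (∫ s in (0:ℝ)..x, exp (s/a) * u₀ s)
            - a⁻¹ * exp (-x/a) * exp (x/a) * f x) * hinv
    rw [eLpNorm_congr_ae hae]
    -- measurability
    have hgIcc : IntegrableOn (fun s => exp (s/a) * g s) (Set.Icc 0 1) volume := by
      rw [integrableOn_Icc_iff_integrableOn_Ioc]
      exact SD.expMulIntOn hgInt a 1 ⟨zero_le_one, le_refl 1⟩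
    have hKg_cont : ContinuousOn (fun x => ∫ s in (0:ℝ)..x, exp (s/a) * g s)
        (Set.Icc 0 1) := by
      apply (intervalIntegral.continuousOn_primitive hgIcc).congr
      intro x hx
      exact intervalIntegral.integral_of_le hx.1
    have hexpcont : Continuous (fun x : ℝ => exp (-x/a)) :=
      continuous_exp.comp ((continuous_neg).div_const a)
    have hR1aesm : AEStronglyMeasurable R1 SD.mu := by
      apply AEStronglyMeasurable.sub
      · exact (hgmem.1.const_mul a⁻¹).congr
          (Filter.Eventually.of_forall fun x => (div_eq_inv_mul (g x) a).symm)
      · exact ((continuous_const.continuousOn).mul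
          ((hexpcont.continuousOn).mul hKg_cont)).mono Set.Ioc_subset_Icc_self
          |>.aestronglyMeasurable measurableSet_Ioc
    have hconte : Continuous (fun s : ℝ => exp (s/a)) :=
      continuous_exp.comp (continuous_id.div_const a)
    have hint_Icc : IntegrableOn (fun s => exp (s/a) * u₀ s) (Set.Icc 0 1) volume :=
      ((hconte.continuousOn).mul hu₀cont).integrableOn_compact isCompact_Icc
    have hprim_cont : ContinuousOn (fun x => ∫ s in (0:ℝ)..x, exp (s/a) * u₀ s)
        (Set.Icc 0 1) := by
      apply (intervalIntegral.continuousOn_primitive hint_Icc).congr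
      intro x hx
      exact intervalIntegral.integral_of_le hx.1
    have hR2aesm : AEStronglyMeasurable R2 SD.mu := by
      apply AEStronglyMeasurable.sub
      · exact (((continuous_const.mul hexpcont).continuousOn).mul hprim_cont).mono
          Set.Ioc_subset_Icc_self |>.aestronglyMeasurable measurableSet_Ioc
      · exact (hu₀cont.mono Set.Ioc_subset_Icc_self).aestronglyMeasurable measurableSet_Ioc
    refine le_trans (eLpNorm_add_le hR1aesm hR2aesm one_le_two) ?_
    have hR2E : eLpNorm R2 2 SD.mu = E a := rfl
    rw [hR2E]
    apply add_le_add_left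
    -- bound R1
    have hA : eLpNorm (fun x => g x / a) 2 SD.mu ≤ ENNReal.ofReal (a⁻¹ * δ) := by
      have heq : (fun x => g x / a) = a⁻¹ • g := by
        funext x
        show g x / a = a⁻¹ * g x
        rw [div_eq_inv_mul]
      rw [heq, eLpNorm_const_smul]
      have hn : ‖(a⁻¹ : ℝ)‖ₑ = ENNReal.ofReal a⁻¹ := by
        rw [← ofReal_norm, Real.norm_eq_abs, abs_of_pos (inv_pos.2 ha)]
      rw [hn, ENNReal.ofReal_mul (inv_pos.2 ha).le]
      exact mul_le_mul_right hgnorm _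
    have hB : eLpNorm (fun x => a⁻¹^2 * (exp (-x/a) * ∫ s in (0:ℝ)..x, exp (s/a) * g s))
        2 SD.mu ≤ ENNReal.ofReal (a⁻¹ * δ) := by
      have heq : (fun x => a⁻¹^2 * (exp (-x/a) * ∫ s in (0:ℝ)..x, exp (s/a) * g s))
          = (a⁻¹^2) • (fun x => exp (-x/a) * ∫ s in (0:ℝ)..x, exp (s/a) * g s) := rfl
      rw [heq, eLpNorm_const_smul]
      have hn : ‖(a⁻¹^2 : ℝ)‖ₑ = ENNReal.ofReal (a⁻¹^2) := by
        rw [← ofReal_norm, Real.norm_eq_abs, abs_of_pos (by positivity)]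
      rw [hn]
      refine le_trans (mul_le_mul_right (SD.schur a ha g hgmem) _) ?_
      refine le_trans (mul_le_mul_right (mul_le_mul_right hgnorm _) _) ?_
      rw [← ENNReal.ofReal_mul (by positivity), ← ENNReal.ofReal_mul (by positivity)]
      apply ENNReal.ofReal_le_ofReal
      apply le_of_eq
      have : a⁻¹^2 * (a * δ) = (a⁻¹ * a) * (a⁻¹ * δ) := by ring
      rw [this, inv_mul_cancel₀ ha.ne', one_mul]
    refine le_trans (eLpNorm_sub_le ((hgmem.1.const_mul a⁻¹).congr
      (Filter.Eventually.of_forall fun x => (div_eq_inv_mul (g x) a).symm))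
      (((continuous_const.continuousOn).mul
          ((hexpcont.continuousOn).mul hKg_cont)).mono Set.Ioc_subset_Icc_self
          |>.aestronglyMeasurable measurableSet_Ioc) one_le_two) ?_
    refine le_trans (add_le_add hA hB) ?_
    rw [← ENNReal.ofReal_add (mul_nonneg (inv_pos.2 ha).le hδ.1.le)
      (mul_nonneg (inv_pos.2 ha).le hδ.1.le)]
    apply ENNReal.ofReal_le_ofReal
    rw [inv_mul_eq_div]
    ring_nf
    exact le_refl _
  -- squeeze
  refine tendsto_of_tendsto_of_tendsto_of_le_of_le' tendsto_const_nhds hsum ?_ hle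
  exact Filter.Eventually.of_forall fun _ => zero_le
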